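/- Let $A$ be a random subset of $\{1,\dots,N\}$ with each element included independently with probability $\alpha$, and let $R(A)$ denote the number of nontrivial solutions to $ab = cd$ with $a,b,c,d \in A$ (i.e., quadruples with $a \notin \{c,d\}$). Then $\mathbb{E}[R(A)] \ll \alpha^4 N^2 \log N + \alpha^3 N (\log N)^3$, with an absolute implied constant (for $N \geq 2$). -/

import Mathlib

open Finset

/-- The probability of obtaining the set `S ⊆ {1,…,N}` when each element of
`{1,…,N}` is chosen independently with probability `α`. -/
noncomputable def randomSetProb (N : ℕ) (α : ℝ) (S : Finset ℕ) : ℝ :=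
  α ^ S.card * (1 - α) ^ (N - S.card)

/-- The number of nontrivial multiplicative quadruples in `S`:
quadruples `(a,b,c,d) ∈ S⁴` with `ab = cd`, `a ≠ c` and `a ≠ d`. -/
def nontrivialQuadruples (S : Finset ℕ) : ℕ :=
  ((S ×ˢ S ×ˢ S ×ˢ S).filter
    (fun q => q.1 * q.2.1 = q.2.2.1 * q.2.2.2 ∧
      q.1 ≠ q.2.2.1 ∧ q.1 ≠ q.2.2.2)).card


lemma sum_le_sum_inj {α β : Type*} [DecidableEq β] {s : Finset α} {t : Finset β}
    (e : α → β) (he : Set.InjOn e s) (hmem : ∀ x ∈ s, e x ∈ t)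
    {f : α → ℝ} {g : β → ℝ} (hg : ∀ y ∈ t, 0 ≤ g y)
    (hfg : ∀ x ∈ s, f x ≤ g (e x)) : ∑ x ∈ s, f x ≤ ∑ y ∈ t, g y := by
  calc ∑ x ∈ s, f x ≤ ∑ x ∈ s, g (e x) := sum_le_sum hfg
    _ = ∑ y ∈ s.image e, g y := (sum_image fun a ha b hb h => he ha hb h).symm
    _ ≤ ∑ y ∈ t, g y := by
        apply sum_le_sum_of_subset_of_nonneg
        · intro y hy
          obtain ⟨x, hx, rfl⟩ := mem_image.mp hy
          exact hmem x hx
        · intro y hy _; exact hg y hy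

lemma harmonic_sum_le (N : ℕ) : ∑ k ∈ Icc 1 N, ((k:ℝ))⁻¹ ≤ 1 + Real.log N := by
  have h := harmonic_le_one_add_log N
  rw [harmonic_eq_sum_Icc] at h
  push_cast at h
  exact h

lemma recon {a b c d : ℕ} (ha : 0 < a) (h : a * b = c * d) :
    (a / Nat.gcd a c) * (d / (a / Nat.gcd a c)) = d ∧
    (c / Nat.gcd a c) * (d / (a / Nat.gcd a c)) = b := by
  set g := Nat.gcd a c with hgdef
  have hgpos : 0 < g := Nat.gcd_pos_of_pos_left _ ha
  have hga : g ∣ a := Nat.gcd_dvd_left a c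
  have hgc : g ∣ c := Nat.gcd_dvd_right a c
  have hxa : g * (a / g) = a := Nat.mul_div_cancel' hga
  have hyc : g * (c / g) = c := Nat.mul_div_cancel' hgc
  have hcop : Nat.Coprime (a / g) (c / g) := Nat.coprime_div_gcd_div_gcd hgpos
  have hxb : (a / g) * b = (c / g) * d := by
    apply Nat.eq_of_mul_eq_mul_left hgpos
    calc g * ((a / g) * b) = (g * (a / g)) * b := (mul_assoc _ _ _).symm
      _ = c * d := by rw [hxa, h]
      _ = (g * (c / g)) * d := by rw [hyc]
      _ = g * ((c / g) * d) := mul_assoc _ _ _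
  have hxd : (a / g) ∣ d := hcop.dvd_of_dvd_mul_left (hxb ▸ dvd_mul_right (a / g) b)
  have hxt : (a / g) * (d / (a / g)) = d := Nat.mul_div_cancel' hxd
  have hxpos : 0 < a / g := Nat.div_pos (Nat.le_of_dvd ha hga) hgpos
  refine ⟨hxt, ?_⟩
  apply Nat.eq_of_mul_eq_mul_left hxpos
  calc (a / g) * ((c / g) * (d / (a / g))) = (c / g) * ((a / g) * (d / (a / g))) := by ring
    _ = (c / g) * d := by rw [hxt]
    _ = (a / g) * b := hxb.symm

lemma energy_card_le (N : ℕ) :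
    (((Icc 1 N ×ˢ Icc 1 N ×ˢ Icc 1 N ×ˢ Icc 1 N).filter
      (fun q : ℕ×ℕ×ℕ×ℕ => q.1 * q.2.1 = q.2.2.1 * q.2.2.2)).card)
    ≤ 2 * ∑ x ∈ Icc 1 N, (N / x) * (x * (N / x)) := by
  classical
  set Q := ((Icc 1 N ×ˢ Icc 1 N ×ˢ Icc 1 N ×ˢ Icc 1 N).filter
      (fun q : ℕ×ℕ×ℕ×ℕ => q.1 * q.2.1 = q.2.2.1 * q.2.2.2)) with hQ
  set P := ((Icc 1 N ×ˢ Icc 1 N ×ˢ Icc 1 N ×ˢ Icc 1 N).filter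
      (fun p : ℕ×ℕ×ℕ×ℕ => p.1 * p.2.1 ≤ N ∧ p.1 * p.2.2.1 ≤ N ∧
        p.2.1 * p.2.2.2 ≤ N ∧ p.2.2.1 * p.2.2.2 ≤ N)) with hP
  have step1 : Q.card ≤ P.card := by
    set e : ℕ×ℕ×ℕ×ℕ → ℕ×ℕ×ℕ×ℕ := fun q =>
      (Nat.gcd q.1 q.2.2.1, q.1 / Nat.gcd q.1 q.2.2.1, q.2.2.1 / Nat.gcd q.1 q.2.2.1,
        q.2.2.2 / (q.1 / Nat.gcd q.1 q.2.2.1)) with he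
    set f : ℕ×ℕ×ℕ×ℕ → ℕ×ℕ×ℕ×ℕ := fun p =>
      (p.1 * p.2.1, p.2.2.1 * p.2.2.2, p.1 * p.2.2.1, p.2.1 * p.2.2.2) with hf
    have key : ∀ q ∈ Q, q = f (e q) := by
      rintro ⟨a, b, c, d⟩ hq
      simp only [hQ, mem_filter, mem_product, mem_Icc] at hq
      obtain ⟨⟨⟨ha1, _⟩, _, _, _⟩, heq⟩ := hq
      obtain ⟨hxt, hyt⟩ := recon ha1 heq
      have hxa : Nat.gcd a c * (a / Nat.gcd a c) = a :=
        Nat.mul_div_cancel' (Nat.gcd_dvd_left a c)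
      have hyc : Nat.gcd a c * (c / Nat.gcd a c) = c :=
        Nat.mul_div_cancel' (Nat.gcd_dvd_right a c)
      simp only [he, hf, Prod.mk.injEq]
      exact ⟨hxa.symm, hyt.symm, hyc.symm, hxt.symm⟩
    apply card_le_card_of_injOn e
    · rintro ⟨a, b, c, d⟩ hq
      simp only [hQ, mem_coe, mem_filter, mem_product, mem_Icc] at hq
      obtain ⟨⟨⟨ha1, ha2⟩, ⟨hb1, hb2⟩, ⟨hc1, hc2⟩, ⟨hd1, hd2⟩⟩, heq⟩ := hq
      obtain ⟨hxt, hyt⟩ := recon ha1 heq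
      have hgpos : 0 < Nat.gcd a c := Nat.gcd_pos_of_pos_left _ ha1
      have hga : Nat.gcd a c ∣ a := Nat.gcd_dvd_left a c
      have hgc : Nat.gcd a c ∣ c := Nat.gcd_dvd_right a c
      have hxa : Nat.gcd a c * (a / Nat.gcd a c) = a := Nat.mul_div_cancel' hga
      have hyc : Nat.gcd a c * (c / Nat.gcd a c) = c := Nat.mul_div_cancel' hgc
      have hxpos : 0 < a / Nat.gcd a c := Nat.div_pos (Nat.le_of_dvd ha1 hga) hgpos
      have hypos : 0 < c / Nat.gcd a c := Nat.div_pos (Nat.le_of_dvd hc1 hgc) hgpos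
      have htpos : 0 < d / (a / Nat.gcd a c) := by
        apply Nat.div_pos _ hxpos
        apply Nat.le_of_dvd hd1
        exact Dvd.intro _ hxt
      simp only [he, hP, mem_coe, mem_filter, mem_product, mem_Icc]
      refine ⟨⟨⟨hgpos, le_trans (Nat.le_of_dvd ha1 hga) ha2⟩,
        ⟨hxpos, le_trans (Nat.div_le_self _ _) ha2⟩,
        ⟨hypos, le_trans (Nat.div_le_self _ _) hc2⟩,
        ⟨htpos, le_trans (Nat.div_le_self _ _) hd2⟩⟩, ?_, ?_, ?_, ?_⟩
      · rw [hxa]; exact ha2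
      · rw [hyc]; exact hc2
      · rw [hxt]; exact hd2
      · rw [hyt]; exact hb2
    · intro q1 h1 q2 h2 h
      rw [key q1 h1, key q2 h2, h]
  have step2 : P.card ≤ 2 * ∑ x ∈ Icc 1 N, (N / x) * (x * (N / x)) := by
    have hsplit : P.card = (P.filter (fun p => p.2.2.1 ≤ p.2.1)).card +
        (P.filter (fun p => ¬ p.2.2.1 ≤ p.2.1)).card :=
      (card_filter_add_card_filter_not _).symm
    have hT : ((Icc 1 N).sigma (fun x => Icc 1 (N / x) ×ˢ (Icc 1 x ×ˢ Icc 1 (N / x)))).card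
        = ∑ x ∈ Icc 1 N, (N / x) * (x * (N / x)) := by
      rw [card_sigma]
      apply sum_congr rfl
      intro x _
      simp [Nat.card_Icc]
    have h1 : (P.filter (fun p => p.2.2.1 ≤ p.2.1)).card ≤
        ∑ x ∈ Icc 1 N, (N / x) * (x * (N / x)) := by
      rw [← hT]
      apply card_le_card_of_injOn
        (fun p => (⟨p.2.1, (p.1, p.2.2.1, p.2.2.2)⟩ : Σ _ : ℕ, ℕ × ℕ × ℕ))
      · rintro ⟨g, x, y, t⟩ hp
        simp only [hP, mem_coe, mem_filter, mem_product, mem_Icc] at hp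
        obtain ⟨⟨⟨⟨hg1, hg2⟩, ⟨hx1, hx2⟩, ⟨hy1, hy2⟩, ⟨ht1, ht2⟩⟩, c1, c2, c3, c4⟩, hle⟩ := hp
        simp only [mem_coe, mem_sigma, mem_product, mem_Icc]
        exact ⟨⟨hx1, hx2⟩, ⟨hg1, (Nat.le_div_iff_mul_le hx1).mpr c1⟩, ⟨hy1, hle⟩,
          ⟨ht1, (Nat.le_div_iff_mul_le hx1).mpr (by rwa [mul_comm])⟩⟩
      · rintro ⟨g1, x1, y1, t1⟩ _ ⟨g2, x2, y2, t2⟩ _ h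
        simp only [Sigma.ext_iff, heq_eq_eq, Prod.mk.injEq] at h
        obtain ⟨hx, hg, hy, ht⟩ := h
        simp [hx, hg, hy, ht]
    have h2 : (P.filter (fun p => ¬ p.2.2.1 ≤ p.2.1)).card ≤
        ∑ x ∈ Icc 1 N, (N / x) * (x * (N / x)) := by
      rw [← hT]
      apply card_le_card_of_injOn
        (fun p => (⟨p.2.2.1, (p.1, p.2.1, p.2.2.2)⟩ : Σ _ : ℕ, ℕ × ℕ × ℕ))
      · rintro ⟨g, x, y, t⟩ hp
        simp only [hP, mem_coe, mem_filter, mem_product, mem_Icc] at hp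
        obtain ⟨⟨⟨⟨hg1, hg2⟩, ⟨hx1, hx2⟩, ⟨hy1, hy2⟩, ⟨ht1, ht2⟩⟩, c1, c2, c3, c4⟩, hle⟩ := hp
        simp only [mem_coe, mem_sigma, mem_product, mem_Icc]
        exact ⟨⟨hy1, hy2⟩, ⟨hg1, (Nat.le_div_iff_mul_le hy1).mpr c2⟩,
          ⟨hx1, le_of_lt (lt_of_not_ge hle)⟩,
          ⟨ht1, (Nat.le_div_iff_mul_le hy1).mpr (by rwa [mul_comm])⟩⟩
      · rintro ⟨g1, x1, y1, t1⟩ _ ⟨g2, x2, y2, t2⟩ _ h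
        simp only [Sigma.ext_iff, heq_eq_eq, Prod.mk.injEq] at h
        obtain ⟨hy, hg, hx, ht⟩ := h
        simp [hx, hg, hy, ht]
    omega
  exact le_trans step1 step2

/-- ℕ-level: number of (a,d₁,d₂) with a ≤ N, d₁,d₂ ∣ a is at most ∑ over pairs of N/lcm. -/
lemma divisor_sigma_card_le (N : ℕ) :
    ((Icc 1 N).sigma (fun a => a.divisors ×ˢ a.divisors)).card ≤
      ∑ p ∈ Icc 1 N ×ˢ Icc 1 N, N / Nat.lcm p.1 p.2 := by
  classical
  have hT : ((Icc 1 N ×ˢ Icc 1 N).sigma (fun p => Icc 1 (N / Nat.lcm p.1 p.2))).card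
      = ∑ p ∈ Icc 1 N ×ˢ Icc 1 N, N / Nat.lcm p.1 p.2 := by
    rw [card_sigma]
    exact sum_congr rfl fun p _ => by simp [Nat.card_Icc]
  rw [← hT]
  apply card_le_card_of_injOn
    (fun x => (⟨(x.2.1, x.2.2), x.1 / Nat.lcm x.2.1 x.2.2⟩ : Σ _ : ℕ × ℕ, ℕ))
  · rintro ⟨a, d1, d2⟩ hx
    simp only [mem_coe, mem_sigma, mem_product, mem_Icc, Nat.mem_divisors] at hx
    obtain ⟨⟨ha1, ha2⟩, ⟨hd1, _⟩, ⟨hd2, _⟩⟩ := hx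
    have hl : Nat.lcm d1 d2 ∣ a := Nat.lcm_dvd hd1 hd2
    have hlpos : 0 < Nat.lcm d1 d2 := Nat.pos_of_dvd_of_pos hl ha1
    simp only [mem_coe, mem_sigma, mem_product, mem_Icc]
    exact ⟨⟨⟨Nat.pos_of_dvd_of_pos hd1 ha1, le_trans (Nat.le_of_dvd ha1 hd1) ha2⟩,
      ⟨Nat.pos_of_dvd_of_pos hd2 ha1, le_trans (Nat.le_of_dvd ha1 hd2) ha2⟩⟩,
      Nat.div_pos (Nat.le_of_dvd ha1 hl) hlpos, Nat.div_le_div_right ha2⟩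
  · rintro ⟨a1, e1, f1⟩ h1 ⟨a2, e2, f2⟩ h2 h
    simp only [Sigma.ext_iff, heq_eq_eq, Prod.mk.injEq] at h
    obtain ⟨⟨hef, hff⟩, hq⟩ := h
    subst hef; subst hff
    simp only [mem_coe, mem_sigma, mem_product, mem_Icc, Nat.mem_divisors] at h1 h2
    have hl1 : Nat.lcm e1 f1 ∣ a1 := Nat.lcm_dvd h1.2.1.1 h1.2.2.1
    have hl2 : Nat.lcm e1 f1 ∣ a2 := Nat.lcm_dvd h2.2.1.1 h2.2.2.1
    have : a1 = a2 := by
      rw [← Nat.mul_div_cancel' hl1, ← Nat.mul_div_cancel' hl2, hq]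
    simp [this]

/-- ℝ-level bound. -/
lemma divisor_sigma_le (N : ℕ) :
    ((((Icc 1 N).sigma (fun a => a.divisors ×ˢ a.divisors)).card : ℝ)) ≤
      (N : ℝ) * (1 + Real.log N) ^ 3 := by
  have h1 := divisor_sigma_card_le N
  have h2 : ((∑ p ∈ Icc 1 N ×ˢ Icc 1 N, N / Nat.lcm p.1 p.2 : ℕ) : ℝ) ≤
      (N : ℝ) * ∑ p ∈ Icc 1 N ×ˢ Icc 1 N, ((Nat.lcm p.1 p.2 : ℝ))⁻¹ := by
    push_cast
    rw [mul_sum]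
    apply sum_le_sum
    intro p _
    calc ((N / Nat.lcm p.1 p.2 : ℕ) : ℝ) ≤ (N : ℝ) / (Nat.lcm p.1 p.2 : ℝ) :=
          Nat.cast_div_le
      _ = (N : ℝ) * ((Nat.lcm p.1 p.2 : ℝ))⁻¹ := div_eq_mul_inv _ _
  have h3 : ∑ p ∈ Icc 1 N ×ˢ Icc 1 N, ((Nat.lcm p.1 p.2 : ℝ))⁻¹ ≤
      (1 + Real.log N) ^ 3 := by
    have hH : (0:ℝ) ≤ ∑ k ∈ Icc 1 N, ((k:ℝ))⁻¹ :=
      sum_nonneg fun k _ => by positivity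
    calc ∑ p ∈ Icc 1 N ×ˢ Icc 1 N, ((Nat.lcm p.1 p.2 : ℝ))⁻¹
        ≤ ∑ r ∈ Icc 1 N ×ˢ (Icc 1 N ×ˢ Icc 1 N),
            ((r.1 : ℝ))⁻¹ * (((r.2.1 : ℝ))⁻¹ * ((r.2.2 : ℝ))⁻¹) := by
          apply sum_le_sum_inj
            (fun p => (Nat.gcd p.1 p.2, (p.1 / Nat.gcd p.1 p.2, p.2 / Nat.gcd p.1 p.2)))
          · intro p1 hp1 p2 hp2 h
            simp only [coe_product, Set.mem_prod, mem_coe, mem_Icc] at hp1 hp2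
            simp only [Prod.mk.injEq] at h
            obtain ⟨hg, hx, hy⟩ := h
            have r1 : Nat.gcd p1.1 p1.2 * (p1.1 / Nat.gcd p1.1 p1.2) = p1.1 :=
              Nat.mul_div_cancel' (Nat.gcd_dvd_left _ _)
            have r2 : Nat.gcd p1.1 p1.2 * (p1.2 / Nat.gcd p1.1 p1.2) = p1.2 :=
              Nat.mul_div_cancel' (Nat.gcd_dvd_right _ _)
            have r3 : Nat.gcd p2.1 p2.2 * (p2.1 / Nat.gcd p2.1 p2.2) = p2.1 :=
              Nat.mul_div_cancel' (Nat.gcd_dvd_left _ _)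
            have r4 : Nat.gcd p2.1 p2.2 * (p2.2 / Nat.gcd p2.1 p2.2) = p2.2 :=
              Nat.mul_div_cancel' (Nat.gcd_dvd_right _ _)
            have e1 : p1.1 = p2.1 := by rw [← r1, hx, hg, r3]
            have e2 : p1.2 = p2.2 := by rw [← r2, hy, hg, r4]
            exact Prod.ext e1 e2
          · rintro ⟨d1, d2⟩ hp
            simp only [mem_product, mem_Icc] at hp
            obtain ⟨⟨h11, h12⟩, h21, h22⟩ := hp
            have hgpos : 0 < Nat.gcd d1 d2 := Nat.gcd_pos_of_pos_left _ h11
            simp only [mem_product, mem_Icc]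
            exact ⟨⟨hgpos, le_trans (Nat.gcd_le_left _ h11) h12⟩,
              ⟨Nat.div_pos (Nat.le_of_dvd h11 (Nat.gcd_dvd_left _ _)) hgpos,
                le_trans (Nat.div_le_self _ _) h12⟩,
              ⟨Nat.div_pos (Nat.le_of_dvd h21 (Nat.gcd_dvd_right _ _)) hgpos,
                le_trans (Nat.div_le_self _ _) h22⟩⟩
          · intro r _; positivity
          · rintro ⟨d1, d2⟩ hp
            simp only [mem_product, mem_Icc] at hp
            obtain ⟨⟨h11, h12⟩, h21, h22⟩ := hp
            have hgpos : 0 < Nat.gcd d1 d2 := Nat.gcd_pos_of_pos_left _ h11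
            have key : Nat.lcm d1 d2 =
                Nat.gcd d1 d2 * ((d1 / Nat.gcd d1 d2) * (d2 / Nat.gcd d1 d2)) := by
              apply Nat.eq_of_mul_eq_mul_left hgpos
              calc Nat.gcd d1 d2 * Nat.lcm d1 d2 = d1 * d2 := Nat.gcd_mul_lcm d1 d2
                _ = (Nat.gcd d1 d2 * (d1 / Nat.gcd d1 d2)) *
                      (Nat.gcd d1 d2 * (d2 / Nat.gcd d1 d2)) := by
                    rw [Nat.mul_div_cancel' (Nat.gcd_dvd_left d1 d2),
                      Nat.mul_div_cancel' (Nat.gcd_dvd_right d1 d2)]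
                _ = Nat.gcd d1 d2 * (Nat.gcd d1 d2 *
                      ((d1 / Nat.gcd d1 d2) * (d2 / Nat.gcd d1 d2))) := by ring
            apply le_of_eq
            simp only
            rw [key]
            push_cast
            rw [mul_inv, mul_inv]
      _ = (∑ k ∈ Icc 1 N, ((k:ℝ))⁻¹) ^ 3 := by
          rw [sum_product]
          simp only
          have hHH : ∑ y ∈ Icc 1 N ×ˢ Icc 1 N, ((y.1 : ℝ))⁻¹ * ((y.2 : ℝ))⁻¹
              = (∑ k ∈ Icc 1 N, ((k:ℝ))⁻¹) * (∑ k ∈ Icc 1 N, ((k:ℝ))⁻¹) := by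
            rw [sum_product, sum_mul_sum]
          calc ∑ x ∈ Icc 1 N, ∑ y ∈ Icc 1 N ×ˢ Icc 1 N,
                ((x : ℝ))⁻¹ * (((y.1 : ℝ))⁻¹ * ((y.2 : ℝ))⁻¹)
              = ∑ x ∈ Icc 1 N, ((x:ℝ))⁻¹ * ∑ y ∈ Icc 1 N ×ˢ Icc 1 N,
                  ((y.1 : ℝ))⁻¹ * ((y.2 : ℝ))⁻¹ := by
                exact sum_congr rfl fun x _ => (mul_sum _ _ _).symm
            _ = (∑ k ∈ Icc 1 N, ((k:ℝ))⁻¹) ^ 3 := by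
                rw [hHH, ← sum_mul]
                ring
      _ ≤ (1 + Real.log N) ^ 3 := by
          apply pow_le_pow_left₀ hH (harmonic_sum_le N)
  calc (((Icc 1 N).sigma (fun a => a.divisors ×ˢ a.divisors)).card : ℝ)
      ≤ ((∑ p ∈ Icc 1 N ×ˢ Icc 1 N, N / Nat.lcm p.1 p.2 : ℕ) : ℝ) := by exact_mod_cast h1
    _ ≤ (N : ℝ) * ∑ p ∈ Icc 1 N ×ˢ Icc 1 N, ((Nat.lcm p.1 p.2 : ℝ))⁻¹ := h2
    _ ≤ (N : ℝ) * (1 + Real.log N) ^ 3 := by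
        apply mul_le_mul_of_nonneg_left h3 (Nat.cast_nonneg N)

lemma degab_card_le (N : ℕ) (Q : Finset (ℕ×ℕ×ℕ×ℕ))
    (hQsub : ∀ q ∈ Q, q ∈ Icc 1 N ×ˢ Icc 1 N ×ˢ Icc 1 N ×ˢ Icc 1 N)
    (hQeq : ∀ q ∈ Q, q.1 * q.2.1 = q.2.2.1 * q.2.2.2) :
    (Q.filter (fun q => q.1 = q.2.1)).card ≤
      ((Icc 1 N).sigma (fun a => a.divisors ×ˢ a.divisors)).card := by
  classical
  set e : ℕ×ℕ×ℕ×ℕ → Σ _ : ℕ, ℕ × ℕ := fun q =>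
    ⟨q.1, (Nat.gcd q.1 q.2.2.1, q.2.2.1 / Nat.gcd q.1 q.2.2.1)⟩ with he
  have key : ∀ q ∈ Q.filter (fun q => q.1 = q.2.1),
      q = ((e q).1, (e q).1, (e q).2.1 * (e q).2.2,
        ((e q).1 * (e q).1) / ((e q).2.1 * (e q).2.2)) := by
    rintro ⟨a, b, c, d⟩ hq
    rw [mem_filter] at hq
    obtain ⟨hqQ, hab⟩ := hq
    have hmem := hQsub _ hqQ
    have heq := hQeq _ hqQ
    simp only [mem_product, mem_Icc] at hmem
    simp only at hab heq
    subst hab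
    have ha1 : 0 < a := hmem.1.1
    have hc1 : 0 < c := hmem.2.2.1.1
    have hgc : Nat.gcd a c * (c / Nat.gcd a c) = c :=
      Nat.mul_div_cancel' (Nat.gcd_dvd_right a c)
    have hd : d = (a * a) / c := by
      rw [heq, Nat.mul_div_cancel_left _ hc1]
    simp only [he]
    rw [hgc, ← hd]
  apply card_le_card_of_injOn e
  · rintro ⟨a, b, c, d⟩ hq
    rw [mem_coe, mem_filter] at hq
    obtain ⟨hqQ, hab⟩ := hq
    have hmem := hQsub _ hqQ
    have heq := hQeq _ hqQ
    simp only [mem_product, mem_Icc] at hmem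
    simp only at hab heq
    subst hab
    have ha1 : 0 < a := hmem.1.1
    obtain ⟨hxt, hyt⟩ := recon ha1 heq
    simp only [he, mem_coe, mem_sigma, mem_product, mem_Icc, Nat.mem_divisors]
    exact ⟨⟨ha1, hmem.1.2⟩, ⟨Nat.gcd_dvd_left a c, ha1.ne'⟩,
      ⟨Dvd.intro _ hyt, ha1.ne'⟩⟩
  · intro q1 h1 q2 h2 h
    rw [key q1 h1, key q2 h2, h]

lemma degcd_card_le (N : ℕ) (Q : Finset (ℕ×ℕ×ℕ×ℕ))
    (hQsub : ∀ q ∈ Q, q ∈ Icc 1 N ×ˢ Icc 1 N ×ˢ Icc 1 N ×ˢ Icc 1 N)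
    (hQeq : ∀ q ∈ Q, q.1 * q.2.1 = q.2.2.1 * q.2.2.2) :
    (Q.filter (fun q => q.2.2.1 = q.2.2.2)).card ≤
      ((Icc 1 N).sigma (fun a => a.divisors ×ˢ a.divisors)).card := by
  classical
  set e : ℕ×ℕ×ℕ×ℕ → Σ _ : ℕ, ℕ × ℕ := fun q =>
    ⟨q.2.2.1, (Nat.gcd q.2.2.1 q.1, q.1 / Nat.gcd q.2.2.1 q.1)⟩ with he
  have key : ∀ q ∈ Q.filter (fun q => q.2.2.1 = q.2.2.2),
      q = ((e q).2.1 * (e q).2.2,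
        ((e q).1 * (e q).1) / ((e q).2.1 * (e q).2.2), (e q).1, (e q).1) := by
    rintro ⟨a, b, c, d⟩ hq
    rw [mem_filter] at hq
    obtain ⟨hqQ, hcd⟩ := hq
    have hmem := hQsub _ hqQ
    have heq := hQeq _ hqQ
    simp only [mem_product, mem_Icc] at hmem
    simp only at hcd heq
    subst hcd
    have ha1 : 0 < a := hmem.1.1
    have hga : Nat.gcd c a * (a / Nat.gcd c a) = a :=
      Nat.mul_div_cancel' (Nat.gcd_dvd_right c a)
    have hb : b = (c * c) / a := by
      rw [← heq, Nat.mul_div_cancel_left _ ha1]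
    simp only [he]
    rw [hga, ← hb]
  apply card_le_card_of_injOn e
  · rintro ⟨a, b, c, d⟩ hq
    rw [mem_coe, mem_filter] at hq
    obtain ⟨hqQ, hcd⟩ := hq
    have hmem := hQsub _ hqQ
    have heq := hQeq _ hqQ
    simp only [mem_product, mem_Icc] at hmem
    simp only at hcd heq
    subst hcd
    have ha1 : 0 < a := hmem.1.1
    have hc1 : 0 < c := hmem.2.2.1.1
    obtain ⟨hxt, hyt⟩ := recon hc1 heq.symm
    simp only [he, mem_coe, mem_sigma, mem_product, mem_Icc, Nat.mem_divisors]
    exact ⟨⟨hc1, hmem.2.2.1.2⟩, ⟨Nat.gcd_dvd_left c a, hc1.ne'⟩,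
      ⟨Dvd.intro _ hyt, hc1.ne'⟩⟩
  · intro q1 h1 q2 h2 h
    rw [key q1 h1, key q2 h2, h]

lemma binom_sum (α : ℝ) (V : Finset ℕ) :
    ∑ S ∈ V.powerset, α ^ S.card * (1 - α) ^ (V.card - S.card) = 1 := by
  classical
  have h := Finset.prod_add (fun _ : ℕ => α) (fun _ : ℕ => 1 - α) V
  simp only [prod_const] at h
  have h2 : ∀ S ∈ V.powerset, α ^ S.card * (1 - α) ^ (V \ S).card
      = α ^ S.card * (1 - α) ^ (V.card - S.card) := by
    intro S hS
    rw [card_sdiff_of_subset (mem_powerset.mp hS)]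
  rw [sum_congr rfl h2] at h
  have : α + (1 - α) = 1 := by ring
  rw [this, one_pow] at h
  exact h.symm

lemma prob_superset (N : ℕ) (α : ℝ) {T : Finset ℕ} (hT : T ⊆ Icc 1 N) :
    ∑ S ∈ (Icc 1 N).powerset, (if T ⊆ S then randomSetProb N α S else 0)
      = α ^ T.card := by
  classical
  rw [← sum_filter]
  have hbij : ∑ S ∈ (Icc 1 N).powerset.filter (fun S => T ⊆ S), randomSetProb N α S
      = ∑ S' ∈ (Icc 1 N \ T).powerset, randomSetProb N α (S' ∪ T) := by
    apply sum_nbij' (fun S => S \ T) (fun S' => S' ∪ T)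
    · intro S hS
      rw [mem_filter, mem_powerset] at hS
      rw [mem_powerset]
      exact sdiff_subset_sdiff hS.1 Subset.rfl
    · intro S' hS'
      rw [mem_powerset] at hS'
      rw [mem_filter, mem_powerset]
      exact ⟨union_subset (hS'.trans sdiff_subset) hT, subset_union_right⟩
    · intro S hS
      rw [mem_filter, mem_powerset] at hS
      exact sdiff_union_of_subset hS.2
    · intro S' hS'
      rw [mem_powerset] at hS'
      apply union_sdiff_cancel_right
      exact Finset.sdiff_disjoint.mono_left hS'
    · intro S hS
      rw [mem_filter, mem_powerset] at hS
      rw [sdiff_union_of_subset hS.2]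
  rw [hbij]
  have hVcard : (Icc 1 N \ T).card = N - T.card := by
    rw [card_sdiff_of_subset hT, Nat.card_Icc]
    omega
  have hterm : ∀ S' ∈ (Icc 1 N \ T).powerset, randomSetProb N α (S' ∪ T)
      = α ^ T.card * (α ^ S'.card * (1 - α) ^ ((Icc 1 N \ T).card - S'.card)) := by
    intro S' hS'
    rw [mem_powerset] at hS'
    have hdisj : Disjoint S' T := Finset.sdiff_disjoint.mono_left hS'
    have hcard : (S' ∪ T).card = S'.card + T.card := card_union_of_disjoint hdisj
    unfold randomSetProb
    rw [hcard, hVcard]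
    have h1 : N - (S'.card + T.card) = N - T.card - S'.card := by omega
    rw [h1, pow_add]
    ring
  rw [sum_congr rfl hterm, ← mul_sum, binom_sum, mul_one]

lemma pointwise_bound (α : ℝ) (h0 : 0 ≤ α) (h1 : α ≤ 1) {a b c d : ℕ}
    (ha : 0 < a) (hb : 0 < b) (hc : 0 < c) (hd : 0 < d)
    (heq : a * b = c * d) (hac : a ≠ c) (had : a ≠ d) :
    α ^ ({a, b, c, d} : Finset ℕ).card ≤
      α ^ 4 + (if a = b ∨ c = d then α ^ 3 else 0) := by
  classical
  by_cases hdeg : a = b ∨ c = d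
  · rw [if_pos hdeg]
    have h3 : 3 ≤ ({a, b, c, d} : Finset ℕ).card := by
      by_cases hab : a = b
      · subst hab
        have hcd : c ≠ d := by
          intro h; subst h
          exact hac (Nat.mul_self_inj.mp heq)
        have : ({a, a, c, d} : Finset ℕ) = {a, c, d} := by
          rw [Finset.insert_idem]
        rw [this]
        rw [card_insert_of_notMem (by simp [hac, had]),
          card_insert_of_notMem (by simp [hcd]), card_singleton]
      · have hcd : c = d := hdeg.resolve_left hab
        subst hcd
        have hbc : b ≠ c := by
          intro h; subst h
          rw [mul_comm] at heq
          exact hab (Nat.eq_of_mul_eq_mul_left hb heq)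
        have : ({a, b, c, c} : Finset ℕ) = {a, b, c} := by
          congr 2
          exact Finset.insert_eq_self.mpr (mem_singleton_self c)
        rw [this]
        rw [card_insert_of_notMem (by simp [hab, hac]),
          card_insert_of_notMem (by simp [hbc]), card_singleton]
    have := pow_le_pow_of_le_one h0 h1 h3
    have h4 : (0:ℝ) ≤ α ^ 4 := by positivity
    linarith
  · rw [if_neg hdeg]
    push_neg at hdeg
    obtain ⟨hab, hcd⟩ := hdeg
    have hbc : b ≠ c := by
      intro h; subst h
      rw [mul_comm] at heq
      exact had (Nat.eq_of_mul_eq_mul_left hb heq)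
    have hbd : b ≠ d := by
      intro h; subst h
      exact hac (Nat.eq_of_mul_eq_mul_right hb heq)
    have hcard : ({a, b, c, d} : Finset ℕ).card = 4 := by
      rw [card_insert_of_notMem (by simp [hab, hac, had]),
        card_insert_of_notMem (by simp [hbc, hbd]),
        card_insert_of_notMem (by simp [hcd]), card_singleton]
    rw [hcard, add_zero]

/-- There is an absolute constant `C` such that for all `N ≥ 2` and all
`0 ≤ α < 1`, the expected number of nontrivial solutions to `ab = cd` in the
random set `A ⊆ {1,…,N}` satisfies
`E[R(A)] ≤ C (α⁴ N² log N + α³ N (log N)³)`. -/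
theorem expected_nontrivialQuadruples_le :
    ∃ C : ℝ, 0 < C ∧ ∀ N : ℕ, 2 ≤ N → ∀ α : ℝ, 0 ≤ α → α < 1 →
      ∑ S ∈ (Finset.Icc 1 N).powerset,
        randomSetProb N α S * (nontrivialQuadruples S : ℝ) ≤
      C * (α ^ 4 * (N : ℝ) ^ 2 * Real.log N +
        α ^ 3 * (N : ℝ) * Real.log N ^ 3) := by
  classical
  refine ⟨54, by norm_num, ?_⟩
  intro N hN α hα0 hα1
  set QN := ((Icc 1 N ×ˢ Icc 1 N ×ˢ Icc 1 N ×ˢ Icc 1 N).filter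
    (fun q : ℕ×ℕ×ℕ×ℕ => q.1 * q.2.1 = q.2.2.1 * q.2.2.2 ∧
      q.1 ≠ q.2.2.1 ∧ q.1 ≠ q.2.2.2)) with hQN
  -- counting identity
  have hcount : ∀ S ∈ (Icc 1 N).powerset, (nontrivialQuadruples S : ℝ)
      = ∑ q ∈ QN, (if ({q.1, q.2.1, q.2.2.1, q.2.2.2} : Finset ℕ) ⊆ S
          then (1:ℝ) else 0) := by
    intro S hS
    rw [mem_powerset] at hS
    have hset : (S ×ˢ S ×ˢ S ×ˢ S).filter
        (fun q : ℕ×ℕ×ℕ×ℕ => q.1 * q.2.1 = q.2.2.1 * q.2.2.2 ∧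
          q.1 ≠ q.2.2.1 ∧ q.1 ≠ q.2.2.2)
        = QN.filter (fun q => ({q.1, q.2.1, q.2.2.1, q.2.2.2} : Finset ℕ) ⊆ S) := by
      ext ⟨a, b, c, d⟩
      simp only [hQN, mem_filter, mem_product, insert_subset_iff, singleton_subset_iff]
      constructor
      · rintro ⟨⟨ha, hb, hc, hd⟩, hcond⟩
        exact ⟨⟨⟨hS ha, hS hb, hS hc, hS hd⟩, hcond⟩, ha, hb, hc, hd⟩
      · rintro ⟨⟨_, hcond⟩, ha, hb, hc, hd⟩
        exact ⟨⟨ha, hb, hc, hd⟩, hcond⟩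
    rw [Finset.sum_boole, nontrivialQuadruples, hset]
  -- swap
  have hswap : ∑ S ∈ (Finset.Icc 1 N).powerset,
      randomSetProb N α S * (nontrivialQuadruples S : ℝ)
      = ∑ q ∈ QN, α ^ ({q.1, q.2.1, q.2.2.1, q.2.2.2} : Finset ℕ).card := by
    calc ∑ S ∈ (Icc 1 N).powerset, randomSetProb N α S * (nontrivialQuadruples S : ℝ)
        = ∑ S ∈ (Icc 1 N).powerset, ∑ q ∈ QN,
            (if ({q.1, q.2.1, q.2.2.1, q.2.2.2} : Finset ℕ) ⊆ S
              then randomSetProb N α S else 0) := by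
          apply sum_congr rfl
          intro S hS
          rw [hcount S hS, mul_sum]
          exact sum_congr rfl fun q _ => by rw [mul_ite, mul_one, mul_zero]
      _ = ∑ q ∈ QN, ∑ S ∈ (Icc 1 N).powerset,
            (if ({q.1, q.2.1, q.2.2.1, q.2.2.2} : Finset ℕ) ⊆ S
              then randomSetProb N α S else 0) := sum_comm
      _ = ∑ q ∈ QN, α ^ ({q.1, q.2.1, q.2.2.1, q.2.2.2} : Finset ℕ).card := by
          apply sum_congr rfl
          intro q hq
          apply prob_superset
          simp only [hQN, mem_filter, mem_product] at hq
          intro x hx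
          simp only [mem_insert, mem_singleton] at hx
          rcases hx with rfl | rfl | rfl | rfl
          exacts [hq.1.1, hq.1.2.1, hq.1.2.2.1, hq.1.2.2.2]
  rw [hswap]
  -- pointwise bound
  have hpt : ∑ q ∈ QN, α ^ ({q.1, q.2.1, q.2.2.1, q.2.2.2} : Finset ℕ).card
      ≤ α ^ 4 * (QN.card : ℝ) + α ^ 3 *
        ((QN.filter (fun q => q.1 = q.2.1 ∨ q.2.2.1 = q.2.2.2)).card : ℝ) := by
    calc ∑ q ∈ QN, α ^ ({q.1, q.2.1, q.2.2.1, q.2.2.2} : Finset ℕ).card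
        ≤ ∑ q ∈ QN, (α ^ 4 + (if q.1 = q.2.1 ∨ q.2.2.1 = q.2.2.2
            then α ^ 3 else 0)) := by
          apply sum_le_sum
          rintro ⟨a, b, c, d⟩ hq
          simp only [hQN, mem_filter, mem_product, mem_Icc] at hq
          obtain ⟨⟨⟨ha1, _⟩, ⟨hb1, _⟩, ⟨hc1, _⟩, ⟨hd1, _⟩⟩, heq, hac, had⟩ := hq
          exact pointwise_bound α hα0 hα1.le ha1 hb1 hc1 hd1 heq hac had
      _ = α ^ 4 * (QN.card : ℝ) + α ^ 3 *
            ((QN.filter (fun q => q.1 = q.2.1 ∨ q.2.2.1 = q.2.2.2)).card : ℝ) := by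
          rw [sum_add_distrib, sum_const, nsmul_eq_mul, ← sum_filter, sum_const,
            nsmul_eq_mul]
          ring
  -- counting bounds
  have hQfull : (QN.card : ℝ) ≤ 2 * (N:ℝ)^2 * (1 + Real.log N) := by
    have h1 : QN.card ≤ ((Icc 1 N ×ˢ Icc 1 N ×ˢ Icc 1 N ×ˢ Icc 1 N).filter
        (fun q : ℕ×ℕ×ℕ×ℕ => q.1 * q.2.1 = q.2.2.1 * q.2.2.2)).card := by
      apply card_le_card
      intro q hq
      rw [hQN, mem_filter] at hq
      rw [mem_filter]
      exact ⟨hq.1, hq.2.1⟩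
    have h2 := energy_card_le N
    have h3 : ((2 * ∑ x ∈ Icc 1 N, (N / x) * (x * (N / x)) : ℕ) : ℝ)
        ≤ 2 * (N:ℝ)^2 * (1 + Real.log N) := by
      push_cast
      have h4 : ∑ x ∈ Icc 1 N, ((N / x : ℕ) : ℝ) * ((x:ℝ) * ((N / x : ℕ) : ℝ))
          ≤ (N:ℝ)^2 * (1 + Real.log N) := by
        calc ∑ x ∈ Icc 1 N, ((N / x : ℕ) : ℝ) * ((x:ℝ) * ((N / x : ℕ) : ℝ))
            ≤ ∑ x ∈ Icc 1 N, (N:ℝ)^2 * ((x:ℝ))⁻¹ := by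
              apply sum_le_sum
              intro x hx
              rw [mem_Icc] at hx
              have hxpos : (0:ℝ) < x := by exact_mod_cast hx.1
              have c1 : ((N / x : ℕ) : ℝ) * (x:ℝ) ≤ (N:ℝ) := by
                exact_mod_cast Nat.div_mul_le_self N x
              have c2 : ((N / x : ℕ) : ℝ) ≤ (N:ℝ) / (x:ℝ) := Nat.cast_div_le
              have c3 : (0:ℝ) ≤ ((N / x : ℕ) : ℝ) := Nat.cast_nonneg _
              calc ((N / x : ℕ) : ℝ) * ((x:ℝ) * ((N / x : ℕ) : ℝ))
                  = (((N / x : ℕ) : ℝ) * (x:ℝ)) * ((N / x : ℕ) : ℝ) := by ring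
                _ ≤ (N:ℝ) * ((N:ℝ) / (x:ℝ)) := by
                    apply mul_le_mul c1 c2 c3 (Nat.cast_nonneg N)
                _ = (N:ℝ)^2 * ((x:ℝ))⁻¹ := by
                    field_simp
            _ = (N:ℝ)^2 * ∑ x ∈ Icc 1 N, ((x:ℝ))⁻¹ := (mul_sum _ _ _).symm
            _ ≤ (N:ℝ)^2 * (1 + Real.log N) := by
              apply mul_le_mul_of_nonneg_left (harmonic_sum_le N) (by positivity)
      linarith
    calc (QN.card : ℝ) ≤ ((2 * ∑ x ∈ Icc 1 N, (N / x) * (x * (N / x)) : ℕ) : ℝ) := by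
          exact_mod_cast le_trans h1 h2
      _ ≤ 2 * (N:ℝ)^2 * (1 + Real.log N) := h3
  have hDeg : ((QN.filter (fun q => q.1 = q.2.1 ∨ q.2.2.1 = q.2.2.2)).card : ℝ)
      ≤ 2 * ((N:ℝ) * (1 + Real.log N) ^ 3) := by
    have hsub : ∀ q ∈ QN, q ∈ Icc 1 N ×ˢ Icc 1 N ×ˢ Icc 1 N ×ˢ Icc 1 N := by
      intro q hq
      rw [hQN, mem_filter] at hq
      exact hq.1
    have heqq : ∀ q ∈ QN, q.1 * q.2.1 = q.2.2.1 * q.2.2.2 := by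
      intro q hq
      rw [hQN, mem_filter] at hq
      exact hq.2.1
    have h1 : (QN.filter (fun q => q.1 = q.2.1 ∨ q.2.2.1 = q.2.2.2)).card
        ≤ (QN.filter (fun q => q.1 = q.2.1)).card +
          (QN.filter (fun q => q.2.2.1 = q.2.2.2)).card := by
      rw [filter_or]
      exact card_union_le _ _
    have h2 := degab_card_le N QN hsub heqq
    have h3 := degcd_card_le N QN hsub heqq
    have h4 := divisor_sigma_le N
    have h5 : ((QN.filter (fun q => q.1 = q.2.1 ∨ q.2.2.1 = q.2.2.2)).card : ℝ)
        ≤ 2 * (((Icc 1 N).sigma (fun a => a.divisors ×ˢ a.divisors)).card : ℝ) := by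
      have h6 := Nat.cast_le (α := ℝ) |>.mpr (le_trans h1 (Nat.add_le_add h2 h3))
      push_cast at h6
      linarith
    linarith
  -- final numeric assembly
  have hL : (0:ℝ) < Real.log N := by
    apply Real.log_pos
    exact_mod_cast lt_of_lt_of_le one_lt_two (by exact_mod_cast hN)
  have h13 : 1 + Real.log N ≤ 3 * Real.log N := by
    have hlog2 : Real.log 2 ≤ Real.log N := by
      apply Real.log_le_log (by norm_num)
      exact_mod_cast hN
    have := Real.log_two_gt_d9
    linarith
  have h27 : (1 + Real.log N) ^ 3 ≤ 27 * Real.log N ^ 3 := by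
    calc (1 + Real.log N) ^ 3 ≤ (3 * Real.log N) ^ 3 := by
          apply pow_le_pow_left₀ (by linarith) h13
      _ = 27 * Real.log N ^ 3 := by ring
  have hα4 : (0:ℝ) ≤ α ^ 4 := by positivity
  have hα3 : (0:ℝ) ≤ α ^ 3 := by positivity
  have hNr : (0:ℝ) ≤ (N:ℝ) := Nat.cast_nonneg N
  have hN2 : (0:ℝ) ≤ (N:ℝ)^2 := by positivity
  calc ∑ q ∈ QN, α ^ ({q.1, q.2.1, q.2.2.1, q.2.2.2} : Finset ℕ).card
      ≤ α ^ 4 * (QN.card : ℝ) + α ^ 3 *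
        ((QN.filter (fun q => q.1 = q.2.1 ∨ q.2.2.1 = q.2.2.2)).card : ℝ) := hpt
    _ ≤ α ^ 4 * (2 * (N:ℝ)^2 * (1 + Real.log N)) +
        α ^ 3 * (2 * ((N:ℝ) * (1 + Real.log N) ^ 3)) := by
        apply add_le_add
        · exact mul_le_mul_of_nonneg_left hQfull hα4
        · exact mul_le_mul_of_nonneg_left hDeg hα3
    _ ≤ 54 * (α ^ 4 * (N : ℝ) ^ 2 * Real.log N +
        α ^ 3 * (N : ℝ) * Real.log N ^ 3) := by
        have B1 : α ^ 4 * (2 * (N:ℝ)^2 * (1 + Real.log N))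
            ≤ α ^ 4 * (2 * (N:ℝ)^2 * (3 * Real.log N)) := by
          apply mul_le_mul_of_nonneg_left _ hα4
          apply mul_le_mul_of_nonneg_left h13 (by positivity)
        have B2 : α ^ 3 * (2 * ((N:ℝ) * (1 + Real.log N) ^ 3))
            ≤ α ^ 3 * (2 * ((N:ℝ) * (27 * Real.log N ^ 3))) := by
          apply mul_le_mul_of_nonneg_left _ hα3
          apply mul_le_mul_of_nonneg_left _ (by norm_num)
          apply mul_le_mul_of_nonneg_left h27 hNr
        have C1 : (0:ℝ) ≤ α ^ 4 * (N:ℝ)^2 * Real.log N := by positivity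
        nlinarith [B1, B2, C1]
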